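/- Let Q ∈ ℝ^{d×d} be symmetric positive semidefinite and let q(x) = (1/2)·xᵀQx. Let X : [0,∞) → ℝ^d be continuous, twice continuously differentiable on (0,∞), with X(0) = X₀ and Ẋ(t) → 0 as t → 0⁺, satisfying Ẍ(t) + (3/t)·Ẋ(t) + Q·X(t) = 0 for all t > 0. Then the trajectory is rectifiable: ∫₀^∞ ‖Ẋ(t)‖ dt < ∞. -/

import Mathlib

open Set Filter MeasureTheory

local notation "⟪" x ", " y "⟫" => @inner ℝ _ _ x y

private lemma coercive_aux {E : Type*} [NormedAddCommGroup E] [InnerProductSpace ℝ E]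
    [FiniteDimensional ℝ E] (T : E →ₗ[ℝ] E)
    (hker : ∀ z : E, ⟪T z, z⟫ = 0 → T z = 0) (hpos : ∀ z : E, 0 ≤ ⟪T z, z⟫) :
    ∃ μ > (0:ℝ), ∀ z ∈ (LinearMap.ker T)ᗮ, μ * ⟪z, z⟫ ≤ ⟪T z, z⟫ := by
  classical
  set K := LinearMap.ker T
  have hTcont : Continuous T := T.continuous_of_finiteDimensional
  set S : Set E := (Kᗮ : Set E) ∩ Metric.sphere 0 1 with hS
  by_cases hne : S.Nonempty
  · have hSc : IsCompact S := by
      apply Metric.isCompact_of_isClosed_isBounded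
      · exact (Kᗮ.closed_of_finiteDimensional).inter (Metric.isClosed_sphere)
      · exact (Metric.isBounded_sphere).subset (Set.inter_subset_right)
    have hfc : ContinuousOn (fun z => ⟪T z, z⟫) S :=
      (hTcont.inner continuous_id).continuousOn
    obtain ⟨z₀, hz₀S, hz₀min⟩ := hSc.exists_isMinOn hne hfc
    set μ := ⟪T z₀, z₀⟫ with hμdef
    have hz₀K : z₀ ∈ Kᗮ := hz₀S.1
    have hz₀n : ‖z₀‖ = 1 := by simpa using hz₀S.2
    have hμpos : 0 < μ := by
      rcases lt_or_eq_of_le (hpos z₀) with h | h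
      · exact h
      · exfalso
        have hz : T z₀ = 0 := hker z₀ h.symm
        have : z₀ ∈ K := LinearMap.mem_ker.mpr hz
        have : z₀ = 0 := by
          have := (Submodule.mem_orthogonal Kᗮ z₀).mp ?_ z₀ hz₀K
          · exact inner_self_eq_zero.mp this
          · exact (Submodule.le_orthogonal_orthogonal K) this
        simp [this] at hz₀n
    refine ⟨μ, hμpos, fun z hz => ?_⟩
    rcases eq_or_ne z 0 with rfl | hz0
    · simp
    · have hnz : (0:ℝ) < ‖z‖ := norm_pos_iff.mpr hz0
      set u := ‖z‖⁻¹ • z with hu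
      have huS : u ∈ S := by
        constructor
        · exact Kᗮ.smul_mem _ hz
        · simp [hu, norm_smul, abs_of_pos (inv_pos.mpr hnz), inv_mul_cancel₀ hnz.ne']
      have hmin := hz₀min huS
      have : μ ≤ ⟪T u, u⟫ := hmin
      have hTu : ⟪T u, u⟫ = ‖z‖⁻¹ * (‖z‖⁻¹ * ⟪T z, z⟫) := by
        simp [hu, _root_.map_smul, inner_smul_left, inner_smul_right]
      rw [hTu] at this
      have hzz : ⟪z, z⟫ = ‖z‖^2 := real_inner_self_eq_norm_sq z
      rw [hzz]
      have h2 : μ * ‖z‖^2 ≤ ‖z‖⁻¹ * (‖z‖⁻¹ * ⟪T z, z⟫) * ‖z‖^2 := by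
        nlinarith [sq_nonneg ‖z‖]
      calc μ * ‖z‖^2 ≤ ‖z‖⁻¹ * (‖z‖⁻¹ * ⟪T z, z⟫) * ‖z‖^2 := h2
        _ = ⟪T z, z⟫ := by rw [pow_two]; field_simp
  · refine ⟨1, one_pos, fun z hz => ?_⟩
    have : z = 0 := by
      by_contra h0
      have hnz : (0:ℝ) < ‖z‖ := norm_pos_iff.mpr h0
      exact hne ⟨‖z‖⁻¹ • z, Kᗮ.smul_mem _ hz, by
        simp [norm_smul, abs_of_pos (inv_pos.mpr hnz), inv_mul_cancel₀ hnz.ne']⟩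
    simp [this]

private lemma const_aux {F : Type*} [NormedAddCommGroup F] [NormedSpace ℝ F]
    {f : ℝ → F} {s : Set ℝ} (hs : Convex ℝ s) (hf : ∀ t ∈ s, HasDerivAt f 0 t)
    {a b : ℝ} (ha : a ∈ s) (hb : b ∈ s) : f a = f b := by
  have h := Convex.norm_image_sub_le_of_norm_hasDerivWithin_le
    (C := 0) (f' := fun _ => (0:F)) (fun x hx => (hf x hx).hasDerivWithinAt)
    (fun x hx => by simp) hs ha hb
  rw [zero_mul] at h
  have := le_antisymm h (norm_nonneg _)
  rw [norm_eq_zero, sub_eq_zero] at this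
  exact this.symm

set_option maxHeartbeats 1600000 in
/-- for a symmetric positive semidefinite `Q`, any solution of the
critical Nesterov flow `Ẍ(t) + (3/t)·Ẋ(t) + Q·X(t) = 0` with `X(0) = X₀` and
`Ẋ(0⁺) = 0` has finite path length: `∫₀^∞ ‖Ẋ(t)‖ dt < ∞`. -/
theorem quadratic_nesterov_flow_rectifiable (d : ℕ)
    (Q : Matrix (Fin d) (Fin d) ℝ) (hQsymm : Q.IsSymm) (hQpsd : Q.PosSemidef)
    (X₀ : EuclideanSpace ℝ (Fin d)) (X X' X'' : ℝ → EuclideanSpace ℝ (Fin d))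
    (hXcont : ContinuousOn X (Set.Ici 0))
    (hX' : ∀ t > (0:ℝ), HasDerivAt X (X' t) t)
    (hX'' : ∀ t > (0:ℝ), HasDerivAt X' (X'' t) t)
    (hX''cont : ContinuousOn X'' (Set.Ioi 0))
    (hX0 : X 0 = X₀)
    (hX'0 : Filter.Tendsto X' (nhdsWithin 0 (Set.Ioi 0)) (nhds 0))
    (hODE : ∀ t > (0:ℝ), X'' t + (3 / t) • X' t + Matrix.toEuclideanLin Q (X t) = 0) :
    (∫⁻ t in Set.Ioi (0:ℝ), (‖X' t‖₊ : ENNReal)) < ⊤ := by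
  classical
  set Tl : EuclideanSpace ℝ (Fin d) →ₗ[ℝ] EuclideanSpace ℝ (Fin d) :=
    Matrix.toEuclideanLin Q with hTl
  set Tc : EuclideanSpace ℝ (Fin d) →L[ℝ] EuclideanSpace ℝ (Fin d) :=
    LinearMap.toContinuousLinearMap Tl with hTcdef
  have hTceq : ∀ x, Tc x = Tl x := fun x => rfl
  have hsym : ∀ x y, ⟪Tc x, y⟫ = ⟪x, Tc y⟫ := by
    have h := Matrix.isHermitian_iff_isSymmetric.mp hQpsd.1
    exact fun x y => h x y
  have hdot : ∀ x : EuclideanSpace ℝ (Fin d), ⟪Tc x, x⟫ =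
      dotProduct (star ((WithLp.equiv 2 _) x)) (Q.mulVec ((WithLp.equiv 2 _) x)) := by
    intro x
    rw [real_inner_comm, EuclideanSpace.inner_eq_star_dotProduct]
    rw [dotProduct_comm]; rfl
  have hpos : ∀ x, 0 ≤ ⟪Tc x, x⟫ := fun x => by rw [hdot]; exact hQpsd.dotProduct_mulVec_nonneg _
  have hker0 : ∀ z, ⟪Tl z, z⟫ = 0 → Tl z = 0 := by
    intro z hz
    have h2 : Q.mulVec ((WithLp.equiv 2 _) z) = 0 :=
      (hQpsd.dotProduct_mulVec_zero_iff _).mp (by rw [← hdot]; exact hz)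
    show Matrix.toEuclideanLin Q z = 0
    rw [Matrix.toEuclideanLin_apply]; erw [h2]
    simp
  obtain ⟨μ, hμpos, hco⟩ := coercive_aux Tl hker0 (fun z => hpos z)
  set K : Submodule ℝ (EuclideanSpace ℝ (Fin d)) := LinearMap.ker Tl with hK
  have hrange : ∀ x, Tc x ∈ Kᗮ := by
    intro x
    rw [Submodule.mem_orthogonal]
    intro u hu
    have hu0 : Tc u = 0 := LinearMap.mem_ker.mp hu
    rw [real_inner_comm, hsym, real_inner_comm]
    simp [hu0]
  set P := K.orthogonalProjectionOnto with hP
  set Pc : EuclideanSpace ℝ (Fin d) →L[ℝ] EuclideanSpace ℝ (Fin d) :=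
    K.subtypeL.comp P with hPcdef
  have hPT : ∀ x, Pc (Tc x) = 0 := by
    intro x
    have := Submodule.orthogonalProjectionOnto_apply_of_mem_orthogonal (hrange x)
    simp [hPcdef, hP, this]
  have hX''eq : ∀ t > (0:ℝ), X'' t = -(Tc (X t)) - (3/t) • X' t := by
    intro t ht
    have h := hODE t ht
    have h1 : (X'' t + (3/t) • X' t) = -(Matrix.toEuclideanLin Q (X t)) :=
      eq_neg_of_add_eq_zero_left h
    have h2 := eq_sub_of_add_eq h1
    exact h2
  -- the kernel component of the velocity vanishes
  have hPX' : ∀ t > (0:ℝ), Pc (X' t) = 0 := by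
    intro t ht
    have hfd : ∀ s ∈ Set.Ioi (0:ℝ), HasDerivAt (fun u => u^3 • Pc (X' u)) 0 s := by
      intro s hs
      have hs0 : (0:ℝ) < s := hs
      have h1 : HasDerivAt (fun u => Pc (X' u)) (Pc (X'' s)) s :=
        Pc.hasFDerivAt.comp_hasDerivAt s (hX'' s hs0)
      have h2 := (hasDerivAt_pow 3 s).smul h1
      refine h2.congr_deriv (Eq.symm ?_)
      rw [hX''eq s hs0]
      simp only [map_sub, map_neg, _root_.map_smul, hPT, neg_zero, zero_sub, smul_neg, smul_smul]
      rw [show s^3 * (3/s) = ((3:ℕ):ℝ) * s^(3-1) from by push_cast; field_simp]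
      simp
    have hconst : ∀ a ∈ Set.Ioi (0:ℝ), ∀ b ∈ Set.Ioi (0:ℝ),
        (fun u => u^3 • Pc (X' u)) a = (fun u => u^3 • Pc (X' u)) b :=
      fun a ha b hb => const_aux (convex_Ioi 0) hfd ha hb
    have hlim0 : Tendsto (fun u => u^3 • Pc (X' u)) (nhdsWithin 0 (Set.Ioi 0)) (nhds 0) := by
      have h1 : Tendsto (fun s : ℝ => s^3) (nhdsWithin 0 (Set.Ioi 0)) (nhds 0) := by
        have h0 : Tendsto (fun s : ℝ => s^3) (nhds 0) (nhds 0) := by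
          simpa using (continuous_pow 3).tendsto (0:ℝ)
        exact h0.mono_left nhdsWithin_le_nhds
      have h2 : Tendsto (fun u => Pc (X' u)) (nhdsWithin 0 (Set.Ioi 0)) (nhds 0) := by
        have := (Pc.continuous.tendsto 0).comp hX'0
        simpa [Function.comp_def] using this
      simpa using h1.smul h2
    have hlimt : Tendsto (fun u => u^3 • Pc (X' u)) (nhdsWithin 0 (Set.Ioi 0))
        (nhds (t^3 • Pc (X' t))) := by
      refine Filter.Tendsto.congr' ?_ tendsto_const_nhds
      filter_upwards [self_mem_nhdsWithin] with s hs
      exact hconst t ht s hs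
    have hft0 : t^3 • Pc (X' t) = 0 := tendsto_nhds_unique hlimt hlim0
    rcases smul_eq_zero.mp hft0 with h | h
    · exact absurd h (pow_ne_zero _ (ne_of_gt ht))
    · exact h
  -- the kernel component of the trajectory is constant
  have hPX : ∀ t > (0:ℝ), Pc (X t) = Pc (X 1) := by
    intro t ht
    have hgd : ∀ s ∈ Set.Ioi (0:ℝ), HasDerivAt (fun u => Pc (X u)) 0 s := by
      intro s hs
      have := Pc.hasFDerivAt.comp_hasDerivAt s (hX' s hs)
      rwa [hPX' s hs] at this
    exact const_aux (convex_Ioi 0) hgd ht (by norm_num : (1:ℝ) ∈ Set.Ioi (0:ℝ))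
  set c : EuclideanSpace ℝ (Fin d) := Pc (X 1) with hc
  have hcK : c ∈ K := by simp [hc, hPcdef]
  have hTcc : Tc c = 0 := LinearMap.mem_ker.mp hcK
  set Z : ℝ → EuclideanSpace ℝ (Fin d) := fun t => X t - c with hZdef
  have hZd : ∀ t > (0:ℝ), HasDerivAt Z (X' t) t := fun t ht => (hX' t ht).sub_const c
  have hTXZ : ∀ t, Tc (X t) = Tc (Z t) := by
    intro t
    simp [hZdef, map_sub, hTcc]
  have hZmem : ∀ t > (0:ℝ), Z t ∈ Kᗮ := by
    intro t ht
    have h1 : Z t = X t - Pc (X t) := by rw [hZdef]; simp [hPX t ht, hc]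
    rw [h1]
    exact K.sub_starProjection_mem_orthogonal (X t)
  have hcoZ : ∀ t > (0:ℝ), μ * ⟪Z t, Z t⟫ ≤ ⟪Tc (Z t), Z t⟫ := fun t ht => hco _ (hZmem t ht)
  -- energy is nonincreasing and bounded by its limit at 0⁺
  set Efun : ℝ → ℝ := fun t => ⟪X' t, X' t⟫ + ⟪Tc (X t), X t⟫ with hEdef
  have hEd : ∀ t > (0:ℝ), HasDerivAt Efun (-(6/t) * ⟪X' t, X' t⟫) t := by
    intro t ht
    have hTX : HasDerivAt (fun s => Tc (X s)) (Tc (X' t)) t :=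
      Tc.hasFDerivAt.comp_hasDerivAt t (hX' t ht)
    have h1 := ((hX'' t ht).inner ℝ (hX'' t ht)).add (hTX.inner ℝ (hX' t ht))
    refine h1.congr_deriv (Eq.symm ?_)
    have hc1 : ⟪Tc (X' t), X t⟫ = ⟪Tc (Z t), X' t⟫ := by
      rw [hsym, real_inner_comm, hTXZ]
    have hc2 : ⟪Tc (X t), X' t⟫ = ⟪Tc (Z t), X' t⟫ := by rw [hTXZ]
    have hc3 : ⟪X' t, X'' t⟫ = ⟪X'' t, X' t⟫ := real_inner_comm _ _
    have hc4 : ⟪X'' t, X' t⟫ = -⟪Tc (Z t), X' t⟫ - (3/t) * ⟪X' t, X' t⟫ := by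
      rw [hX''eq t ht, hTXZ]
      rw [inner_sub_left, inner_neg_left, real_inner_smul_left]
    rw [hc3, hc4, hc1, hc2]
    field_simp
    ring
  have hEanti : AntitoneOn Efun (Set.Ioi 0) := by
    apply antitoneOn_of_deriv_nonpos (convex_Ioi 0)
    · intro x hx
      exact (hEd x hx).continuousAt.continuousWithinAt
    · intro x hx
      rw [interior_Ioi] at hx
      exact (hEd x hx).differentiableAt.differentiableWithinAt
    · intro x hx
      rw [interior_Ioi] at hx
      rw [(hEd x hx).deriv]
      have h1 : (0:ℝ) ≤ ⟪X' x, X' x⟫ := real_inner_self_nonneg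
      have hx0 : (0:ℝ) < x := hx
      have h2 : (0:ℝ) < 6/x := div_pos (by norm_num) hx0
      have := mul_nonneg h2.le h1
      linarith
  set L : ℝ := ⟪Tc X₀, X₀⟫ with hLdef
  have hL0 : 0 ≤ L := hpos X₀
  have hElim : Tendsto Efun (nhdsWithin 0 (Set.Ioi 0)) (nhds L) := by
    have tX : Tendsto X (nhdsWithin 0 (Set.Ioi 0)) (nhds X₀) := by
      have h0 : Tendsto X (nhdsWithin 0 (Set.Ici 0)) (nhds X₀) := by
        have := (hXcont 0 Set.self_mem_Ici).tendsto
        rwa [hX0] at this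
      exact h0.mono_left (nhdsWithin_mono 0 Set.Ioi_subset_Ici_self)
    have h1 : Tendsto (fun t => ⟪X' t, X' t⟫) (nhdsWithin 0 (Set.Ioi 0))
        (nhds (0:ℝ)) := by
      have := Filter.Tendsto.inner (𝕜 := ℝ) hX'0 hX'0
      simpa using this
    have h2 : Tendsto (fun t => ⟪Tc (X t), X t⟫) (nhdsWithin 0 (Set.Ioi 0)) (nhds L) := by
      exact Filter.Tendsto.inner (𝕜 := ℝ) ((Tc.continuous.tendsto X₀).comp tX) tX
    have := h1.add h2
    simpa [hEdef] using this
  have hEle : ∀ t > (0:ℝ), Efun t ≤ L := by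
    intro t ht
    apply ge_of_tendsto hElim
    filter_upwards [Ioc_mem_nhdsGT_of_mem (Set.mem_Ico.mpr ⟨le_refl 0, ht⟩)] with s hs
    exact hEanti hs.1 ht hs.2
  have haL : ∀ t > (0:ℝ), ⟪X' t, X' t⟫ ≤ L := by
    intro t ht
    have := hEle t ht
    have h2 := hpos (X t)
    simp only [hEdef] at this
    linarith
  have hbL : ∀ t > (0:ℝ), ⟪Tc (Z t), Z t⟫ ≤ L := by
    intro t ht
    have hzz : ⟪Tc (Z t), Z t⟫ = ⟪Tc (X t), X t⟫ := by
      rw [hTXZ]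
      have : Tc (Z t) = Tc (X t) := (hTXZ t).symm
      rw [this]
      simp only [hZdef]
      rw [inner_sub_right]
      have hc0 : ⟪Tc (X t), c⟫ = 0 := by rw [hsym]; simp [hTcc]
      rw [hc0]
      ring
    rw [hzz]
    have := hEle t ht
    have h2 : (0:ℝ) ≤ ⟪X' t, X' t⟫ := real_inner_self_nonneg
    simp only [hEdef] at this
    linarith
  -- the Lyapunov function G
  set G : ℝ → ℝ := fun t => t^3 * (⟪X' t, X' t⟫ + ⟪Tc (Z t), Z t⟫)
      + 3*t^2 * ⟪X' t, Z t⟫ + 3/2*t*⟪Z t, Z t⟫ with hGdef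
  have hGd : ∀ t > (0:ℝ), HasDerivAt G (3/2 * ⟪Z t, Z t⟫) t := by
    intro t ht
    have hTZ : HasDerivAt (fun s => Tc (Z s)) (Tc (X' t)) t :=
      Tc.hasFDerivAt.comp_hasDerivAt t (hZd t ht)
    have hd1 : HasDerivAt (fun s => ⟪X' s, X' s⟫ + ⟪Tc (Z s), Z s⟫)
        ((⟪X' t, X'' t⟫ + ⟪X'' t, X' t⟫) + (⟪Tc (Z t), X' t⟫ + ⟪Tc (X' t), Z t⟫)) t :=
      ((hX'' t ht).inner ℝ (hX'' t ht)).add (hTZ.inner ℝ (hZd t ht))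
    have hd2 : HasDerivAt (fun s => ⟪X' s, Z s⟫) (⟪X' t, X' t⟫ + ⟪X'' t, Z t⟫) t :=
      (hX'' t ht).inner ℝ (hZd t ht)
    have hd3 : HasDerivAt (fun s => ⟪Z s, Z s⟫) (⟪Z t, X' t⟫ + ⟪X' t, Z t⟫) t :=
      (hZd t ht).inner ℝ (hZd t ht)
    have hraw := (((hasDerivAt_pow 3 t).mul hd1).add
      (((hasDerivAt_pow 2 t).const_mul (3:ℝ)).mul hd2)).add
      (((hasDerivAt_id t).const_mul (3/2:ℝ)).mul hd3)
    refine hraw.congr_deriv (Eq.symm ?_)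
    have hi3 : ⟪X' t, X'' t⟫ = ⟪X'' t, X' t⟫ := real_inner_comm _ _
    have hi1 : ⟪X'' t, X' t⟫ = -⟪Tc (Z t), X' t⟫ - (3/t) * ⟪X' t, X' t⟫ := by
      rw [hX''eq t ht, hTXZ]
      rw [inner_sub_left, inner_neg_left, real_inner_smul_left]
    have hi2 : ⟪X'' t, Z t⟫ = -⟪Tc (Z t), Z t⟫ - (3/t) * ⟪X' t, Z t⟫ := by
      rw [hX''eq t ht, hTXZ]
      rw [inner_sub_left, inner_neg_left, real_inner_smul_left]
    have hi4 : ⟪Tc (X' t), Z t⟫ = ⟪Tc (Z t), X' t⟫ :=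
      (hsym (X' t) (Z t)).trans (real_inner_comm _ _)
    have hi5 : ⟪Z t, X' t⟫ = ⟪X' t, Z t⟫ := real_inner_comm _ _
    rw [hi3, hi1, hi2, hi4, hi5]
    have htne : t ≠ 0 := ne_of_gt ht
    set a := ⟪X' t, X' t⟫
    set b := ⟪Tc (Z t), Z t⟫
    set p := ⟪X' t, Z t⟫
    set q := ⟪Tc (Z t), X' t⟫
    set z := ⟪Z t, Z t⟫
    simp only [id_eq]
    push_cast
    field_simp
    ring
  have hGid : ∀ t : ℝ, G t = t*⟪t•X' t + (3/2:ℝ)•Z t, t•X' t + (3/2:ℝ)•Z t⟫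
      + t^3*⟪Tc (Z t), Z t⟫ - 3/4*t*⟪Z t, Z t⟫ := by
    intro t
    rw [hGdef]
    simp only [inner_add_left, inner_add_right, real_inner_smul_left, real_inner_smul_right]
    rw [real_inner_comm (Z t) (X' t)]
    ring
  set T₀ : ℝ := max 1 (Real.sqrt (3/μ)) with hT₀def
  have hT₀1 : (1:ℝ) ≤ T₀ := le_max_left _ _
  have hT₀pos : (0:ℝ) < T₀ := lt_of_lt_of_le one_pos hT₀1
  have hμt : ∀ t, T₀ ≤ t → 3 ≤ μ * t^2 := by
    intro t htt
    have h1 : Real.sqrt (3/μ) ≤ t := le_trans (le_max_right _ _) htt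
    have h2 : (3/μ) ≤ t^2 := by
      have h3 := Real.sq_sqrt (le_of_lt (div_pos (by norm_num : (0:ℝ) < 3) hμpos))
      nlinarith [Real.sqrt_nonneg (3/μ)]
    calc (3:ℝ) = μ * (3/μ) := by field_simp
      _ ≤ μ * t^2 := by nlinarith
  have hZZ : ∀ t : ℝ, (0:ℝ) ≤ ⟪Z t, Z t⟫ := fun t => real_inner_self_nonneg
  have hWW : ∀ t : ℝ, (0:ℝ) ≤ ⟪t•X' t + (3/2:ℝ)•Z t, t•X' t + (3/2:ℝ)•Z t⟫ :=
    fun t => real_inner_self_nonneg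
  have hGlow1 : ∀ t, T₀ ≤ t → 3/4*μ*t^3*⟪Z t, Z t⟫ ≤ G t := by
    intro t htt
    have ht0 : (0:ℝ) < t := lt_of_lt_of_le hT₀pos htt
    have h3 := hμt t htt
    have hcz := hcoZ t ht0
    rw [hGid t]
    nlinarith [hWW t, hZZ t, mul_nonneg ht0.le (hWW t),
      mul_nonneg (sub_nonneg.mpr h3) (mul_nonneg ht0.le (hZZ t)),
      mul_nonneg (mul_nonneg (mul_nonneg ht0.le ht0.le) ht0.le) (sub_nonneg.mpr hcz)]
  have hGlow2 : ∀ t, T₀ ≤ t → t*⟪t•X' t + (3/2:ℝ)•Z t, t•X' t + (3/2:ℝ)•Z t⟫ ≤ G t := by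
    intro t htt
    have ht0 : (0:ℝ) < t := lt_of_lt_of_le hT₀pos htt
    have h3 := hμt t htt
    have hcz := hcoZ t ht0
    rw [hGid t]
    nlinarith [hZZ t, mul_nonneg (sub_nonneg.mpr h3) (mul_nonneg ht0.le (hZZ t)),
      mul_nonneg (mul_nonneg (mul_nonneg ht0.le ht0.le) ht0.le) (sub_nonneg.mpr hcz)]
  have hGnn : ∀ t, T₀ ≤ t → 0 ≤ G t := by
    intro t htt
    have ht0 : (0:ℝ) < t := lt_of_lt_of_le hT₀pos htt
    refine le_trans ?_ (hGlow1 t htt)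
    exact mul_nonneg (mul_nonneg (mul_nonneg (by norm_num) hμpos.le)
      (pow_pos ht0 3).le) (hZZ t)
  -- Gronwall
  set H : ℝ → ℝ := fun t => G t * Real.exp ((μ * t^2)⁻¹) with hHdef
  have hHd : ∀ t, T₀ ≤ t → HasDerivAt H
      ((3/2 * ⟪Z t, Z t⟫) * Real.exp ((μ * t^2)⁻¹)
        + G t * (Real.exp ((μ * t^2)⁻¹) * (-(2/(μ*t^3))))) t := by
    intro t htt
    have ht0 : (0:ℝ) < t := lt_of_lt_of_le hT₀pos htt
    have hne : (μ*t^2) ≠ 0 := ne_of_gt (mul_pos hμpos (pow_pos ht0 2))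
    have hinv := ((hasDerivAt_pow 2 t).const_mul μ).inv hne
    have hder := (hGd t ht0).mul hinv.exp
    refine hder.congr_deriv (Eq.symm ?_)
    congr 1
    congr 1
    simp only [Pi.inv_apply]
    push_cast
    field_simp
  have hHanti : AntitoneOn H (Set.Ici T₀) := by
    apply antitoneOn_of_deriv_nonpos (convex_Ici T₀)
    · intro x hx
      exact (hHd x hx).continuousAt.continuousWithinAt
    · intro x hx
      rw [interior_Ici] at hx
      exact (hHd x hx.le).differentiableAt.differentiableWithinAt
    · intro x hx
      rw [interior_Ici] at hx
      have hx0 : (0:ℝ) < x := lt_of_lt_of_le hT₀pos hx.le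
      rw [(hHd x hx.le).deriv]
      have he : (0:ℝ) < Real.exp ((μ * x^2)⁻¹) := Real.exp_pos _
      have hkey : 3/2*⟪Z x, Z x⟫ ≤ G x * (2/(μ*x^3)) := by
        have hpos3 : (0:ℝ) < 2/(μ*x^3) :=
          div_pos (by norm_num) (mul_pos hμpos (pow_pos hx0 3))
        have h1 := mul_le_mul_of_nonneg_right (hGlow1 x hx.le) hpos3.le
        calc 3/2*⟪Z x, Z x⟫ = 3/4*μ*x^3*⟪Z x, Z x⟫ * (2/(μ*x^3)) := by
              field_simp; ring
          _ ≤ G x * (2/(μ*x^3)) := h1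
      nlinarith [mul_nonneg he.le (sub_nonneg.mpr hkey)]
  set Cb : ℝ := G T₀ * Real.exp ((μ * T₀^2)⁻¹) with hCbdef
  have hGb : ∀ t, T₀ ≤ t → G t ≤ Cb := by
    intro t htt
    have h1 : H t ≤ H T₀ := hHanti Set.self_mem_Ici htt htt
    have h2 : G t ≤ H t := by
      have he1 : 1 ≤ Real.exp ((μ * t^2)⁻¹) :=
        Real.one_le_exp (inv_nonneg.mpr (mul_nonneg hμpos.le (sq_nonneg t)))
      have heq : H t = G t * Real.exp ((μ * t^2)⁻¹) := rfl
      rw [heq]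
      calc G t = G t * 1 := (mul_one _).symm
        _ ≤ G t * Real.exp ((μ * t^2)⁻¹) :=
            mul_le_mul_of_nonneg_left he1 (hGnn t htt)
    exact le_trans h2 h1
  have hCb0 : 0 ≤ Cb := le_trans (hGnn T₀ le_rfl) (hGb T₀ le_rfl)
  -- pointwise tail bound
  set A : ℝ := Real.sqrt (4*Cb/(3*μ)) with hAdef
  set B : ℝ := Real.sqrt Cb + 3/2*A with hBdef
  have htail : ∀ t, T₀ ≤ t → ‖X' t‖ ≤ B / (t * Real.sqrt t) := by
    intro t htt
    have ht0 : (0:ℝ) < t := lt_of_lt_of_le hT₀pos htt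
    have ht1 : (1:ℝ) ≤ t := le_trans hT₀1 htt
    have hs0 : 0 < Real.sqrt t := Real.sqrt_pos.mpr ht0
    have hs2 : Real.sqrt t^2 = t := Real.sq_sqrt ht0.le
    have hw1 : t * ⟪t•X' t + (3/2:ℝ)•Z t, t•X' t + (3/2:ℝ)•Z t⟫ ≤ Cb :=
      le_trans (hGlow2 t htt) (hGb t htt)
    have hz1 : 3/4*μ*t^3*⟪Z t, Z t⟫ ≤ Cb := le_trans (hGlow1 t htt) (hGb t htt)
    have hwn : ⟪t•X' t + (3/2:ℝ)•Z t, t•X' t + (3/2:ℝ)•Z t⟫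
        = ‖t•X' t + (3/2:ℝ)•Z t‖^2 := real_inner_self_eq_norm_sq _
    have hzn : ⟪Z t, Z t⟫ = ‖Z t‖^2 := real_inner_self_eq_norm_sq (Z t)
    rw [hwn] at hw1
    rw [hzn] at hz1
    have hnorm : t * ‖X' t‖ ≤ ‖t•X' t + (3/2:ℝ)•Z t‖ + 3/2*‖Z t‖ := by
      have h1 : ‖t • X' t‖ = t*‖X' t‖ := by
        rw [norm_smul]; rw [Real.norm_eq_abs, abs_of_pos ht0]
      calc t * ‖X' t‖ = ‖t • X' t‖ := h1.symm
        _ = ‖(t•X' t + (3/2:ℝ)•Z t) - (3/2:ℝ)•Z t‖ := by rw [add_sub_cancel_right]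
        _ ≤ ‖t•X' t + (3/2:ℝ)•Z t‖ + ‖(3/2:ℝ)•Z t‖ := norm_sub_le _ _
        _ = ‖t•X' t + (3/2:ℝ)•Z t‖ + 3/2*‖Z t‖ := by
            rw [norm_smul, Real.norm_eq_abs]; norm_num
    set nw : ℝ := ‖t•X' t + (3/2:ℝ)•Z t‖ with hnw
    set nz : ℝ := ‖Z t‖ with hnz
    set nx : ℝ := ‖X' t‖ with hnx
    set st : ℝ := Real.sqrt t with hst
    have hnw0 : 0 ≤ nw := norm_nonneg _
    have hnz0 : 0 ≤ nz := norm_nonneg _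
    have hnx0 : 0 ≤ nx := norm_nonneg _
    clear_value nw nz nx st A B Cb H G Z Efun Tc Tl
    have hswb : st * nw ≤ Real.sqrt Cb := by
      apply Real.le_sqrt_of_sq_le
      have he : (st*nw)^2 = t*nw^2 := by rw [← hs2]; ring
      rw [he]
      exact hw1
    have hAz : t * st * nz ≤ A := by
      rw [hAdef]
      apply Real.le_sqrt_of_sq_le
      rw [le_div_iff₀ (mul_pos (by norm_num : (0:ℝ) < 3) hμpos)]
      have he : (t*st*nz)^2 * (3*μ) = (3/4*μ*t^3*nz^2)*4 := by rw [← hs2]; ring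
      rw [he]
      linarith [hz1]
    rw [le_div_iff₀ (mul_pos ht0 hs0)]
    rw [hBdef]
    calc nx * (t * st) = (t*nx)*st := by ring
      _ ≤ (nw + 3/2*nz)*st := mul_le_mul_of_nonneg_right hnorm hs0.le
      _ = st*nw + 3/2*(st*nz) := by ring
      _ ≤ Real.sqrt Cb + 3/2*(t*(st*nz)) := by
          have h5 : st*nz ≤ t*(st*nz) :=
            le_mul_of_one_le_left (mul_nonneg hs0.le hnz0) ht1
          have h6 : 3/2*(st*nz) ≤ 3/2*(t*(st*nz)) := by linarith
          linarith [hswb]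
      _ ≤ Real.sqrt Cb + 3/2*A := by
          have h7 : t*(st*nz) ≤ A := by
            calc t*(st*nz) = t*st*nz := by ring
              _ ≤ A := hAz
          linarith
  -- putting the integral together
  have hsplit : Set.Ioi (0:ℝ) = Set.Ioc 0 T₀ ∪ Set.Ioi T₀ :=
    (Set.Ioc_union_Ioi_eq_Ioi hT₀pos.le).symm
  have hI1 : (∫⁻ t in Set.Ioc (0:ℝ) T₀, (‖X' t‖₊ : ENNReal)) < ⊤ := by
    have hb : ∀ t ∈ Set.Ioc (0:ℝ) T₀, (‖X' t‖₊ : ENNReal) ≤ ENNReal.ofReal (Real.sqrt L) := by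
      intro t htm
      have h1 : ‖X' t‖ ≤ Real.sqrt L := by
        apply Real.le_sqrt_of_sq_le
        have := haL t htm.1
        rwa [real_inner_self_eq_norm_sq] at this
      calc (‖X' t‖₊ : ENNReal) = ENNReal.ofReal ‖X' t‖ := (ofReal_norm _).symm
        _ ≤ ENNReal.ofReal (Real.sqrt L) := ENNReal.ofReal_le_ofReal h1
    have hmono := MeasureTheory.setLIntegral_mono' (μ := volume) measurableSet_Ioc hb
    rw [MeasureTheory.setLIntegral_const] at hmono
    exact lt_of_le_of_lt hmono (ENNReal.mul_lt_top ENNReal.ofReal_lt_top measure_Ioc_lt_top)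
  have hI2 : (∫⁻ t in Set.Ioi T₀, (‖X' t‖₊ : ENNReal)) < ⊤ := by
    have hInt : MeasureTheory.IntegrableOn (fun t => B * t ^ (-(3:ℝ)/2)) (Set.Ioi T₀) :=
      ((integrableOn_Ioi_rpow_iff hT₀pos).mpr (by norm_num)).const_mul B
    have hb2 : ∀ t ∈ Set.Ioi T₀,
        (‖X' t‖₊ : ENNReal) ≤ (‖B * t ^ (-(3:ℝ)/2)‖₊ : ENNReal) := by
      intro t htm
      have ht0 : (0:ℝ) < t := lt_trans hT₀pos htm
      have hgeq : B / (t * Real.sqrt t) = B * t ^ (-(3:ℝ)/2) := by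
        rw [show (-(3:ℝ)/2) = -((3:ℝ)/2) by norm_num, Real.rpow_neg ht0.le,
          Real.sqrt_eq_rpow, show (3:ℝ)/2 = 1 + 1/2 by norm_num, Real.rpow_add ht0,
          Real.rpow_one, div_eq_mul_inv]
      have h1 : ‖X' t‖ ≤ B * t ^ (-(3:ℝ)/2) := by
        rw [← hgeq]; exact htail t (le_of_lt htm)
      calc (‖X' t‖₊ : ENNReal) = ENNReal.ofReal ‖X' t‖ := (ofReal_norm _).symm
        _ ≤ ENNReal.ofReal ‖B * t ^ (-(3:ℝ)/2)‖ :=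
            ENNReal.ofReal_le_ofReal (le_trans h1 (le_abs_self _))
        _ = (‖B * t ^ (-(3:ℝ)/2)‖₊ : ENNReal) := ofReal_norm _
    have hmono := MeasureTheory.setLIntegral_mono' (μ := volume) measurableSet_Ioi hb2
    exact lt_of_le_of_lt hmono hInt.2
  rw [hsplit, MeasureTheory.lintegral_union measurableSet_Ioi Set.Ioc_disjoint_Ioi_same]
  exact ENNReal.add_lt_top.mpr ⟨hI1, hI2⟩
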